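/- Let n ≥ 2 and let z₀ ≤ z₁ ≤ ⋯ ≤ zₙ be real numbers with 0 < z₀ and 2·zₙ < z₀ + ⋯ + zₙ. Then there exist points P₀, …, P_{n−1} ∈ ℝⁿ such that, setting Pₙ := 0: for each k with 0 ≤ k ≤ n−1, P_k lies in the linear span of the first k+1 standard basis vectors e₁, …, e_{k+1} but not in the linear span of e₁, …, e_k; ‖P₀ − Pₙ‖ = z₀; and ‖P_k − P_{k−1}‖ = z_k for every k with 1 ≤ k ≤ n. -/

import Mathlib

set_option linter.unusedSectionVars false

open scoped RealInnerProductSpace BigOperators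

namespace ExistsPointsAux

lemma eq_of_sq_eq {a b : ℝ} (ha : 0 ≤ a) (hb : 0 < b) (h : a ^ 2 = b ^ 2) : a = b := by
  have h2 : (a - b) * (a + b) = 0 := by ring_nf; linarith
  rcases mul_eq_zero.mp h2 with h3 | h3
  · linarith
  · linarith

lemma norm_sq_aux {n : ℕ} (v : EuclideanSpace ℝ (Fin n)) (j : Fin n) (c b : ℝ)
    (hvj : v j = 0) :
    ‖c • v + EuclideanSpace.single j b‖ ^ 2 = c ^ 2 * ‖v‖ ^ 2 + b ^ 2 := by
  rw [norm_add_sq_real]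
  have h1 : (inner ℝ (c • v) (EuclideanSpace.single j b) : ℝ) = 0 := by
    rw [EuclideanSpace.inner_single_right]
    simp [PiLp.smul_apply, hvj]
  rw [h1, EuclideanSpace.norm_single, norm_smul]
  simp [mul_pow, sq_abs, Real.norm_eq_abs]

lemma apply_aux {n : ℕ} (v : EuclideanSpace ℝ (Fin n)) (j : Fin n) (c b : ℝ) (i : Fin n) :
    (c • v + EuclideanSpace.single j b) i = c * v i + (if i = j then b else 0) := by
  simp [PiLp.add_apply, PiLp.smul_apply, EuclideanSpace.single_apply]

lemma mem_span_lt {n : ℕ} (x : EuclideanSpace ℝ (Fin n)) (m : ℕ)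
    (h : ∀ j : Fin n, m ≤ (j : ℕ) → x j = 0) :
    x ∈ Submodule.span ℝ
      ((fun i : Fin n => EuclideanSpace.single i (1 : ℝ)) '' {i | (i : ℕ) < m}) := by
  have hx : x = ∑ j ∈ Finset.univ.filter (fun j : Fin n => (j : ℕ) < m),
      x j • EuclideanSpace.single j (1 : ℝ) := by
    ext i
    rw [WithLp.ofLp_sum, Finset.sum_apply]
    simp only [PiLp.smul_apply, EuclideanSpace.single_apply, smul_eq_mul, mul_ite, mul_one,
      mul_zero]
    rw [Finset.sum_ite_eq]
    by_cases him : (i : ℕ) < m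
    · simp [him]
    · simp [him, h i (le_of_not_gt him)]
  rw [hx]
  refine Submodule.sum_mem _ fun j hj => Submodule.smul_mem _ _ (Submodule.subset_span ?_)
  exact ⟨j, by simpa using (Finset.mem_filter.mp hj).2, rfl⟩

lemma not_mem_span_lt {n : ℕ} (x : EuclideanSpace ℝ (Fin n)) (m : ℕ) (j : Fin n)
    (hj : m ≤ (j : ℕ)) (hx : x j ≠ 0) :
    x ∉ Submodule.span ℝ
      ((fun i : Fin n => EuclideanSpace.single i (1 : ℝ)) '' {i | (i : ℕ) < m}) := by
  intro hmem
  refine hx ?_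
  clear hx
  induction hmem using Submodule.span_induction with
  | mem y hy =>
      obtain ⟨i, hi, rfl⟩ := hy
      have : j ≠ i := by
        intro h; subst h; exact absurd hi (by simpa using not_lt.mpr hj)
      simp [EuclideanSpace.single_apply, this]
  | zero => simp
  | add y1 y2 _ _ h1 h2 => simp [PiLp.add_apply, h1, h2]
  | smul c y _ h1 => simp [PiLp.smul_apply, h1]


noncomputable section

variable (n : ℕ) (z : Fin (n + 1) → ℝ)

def zn (i : ℕ) : ℝ := z ⟨min i n, Nat.lt_succ_of_le (min_le_right i n)⟩

def A (k : ℕ) : ℝ := ∑ i ∈ Finset.range (k + 1), zn n z i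

def eps : ℝ := min (zn n z 0 / 2) ((A n z n - 2 * zn n z n) / ((n : ℝ) - 1))

def ff (k : ℕ) : ℝ := A n z k - k * eps n z

def gg (k : ℕ) : ℝ := zn n z n + ((n : ℝ) - 1 - k) * eps n z

def rr (k : ℕ) : ℝ := min (ff n z k) (gg n z k)

def pa (k : ℕ) : ℝ := (rr n z (k - 1) ^ 2 + rr n z k ^ 2 - zn n z k ^ 2) / (2 * rr n z (k - 1))

def pb (k : ℕ) : ℝ := Real.sqrt (rr n z k ^ 2 - pa n z k ^ 2)

def P : ℕ → EuclideanSpace ℝ (Fin n)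
  | 0 => if h : 0 < n then EuclideanSpace.single ⟨0, h⟩ (zn n z 0) else 0
  | (k + 1) => if h : k + 1 < n then
      (pa n z (k + 1) / rr n z k) • P k
        + EuclideanSpace.single ⟨k + 1, h⟩ (pb n z (k + 1))
    else 0

end

section Lemmas

variable {n : ℕ} {z : Fin (n + 1) → ℝ}
variable (hn : 2 ≤ n) (hz0 : 0 < z 0) (hmono : Monotone z)
variable (hineq : 2 * z (Fin.last n) < ∑ i, z i)

include hn hz0 hmono hineq

lemma zn_mono {i j : ℕ} (hij : i ≤ j) : zn n z i ≤ zn n z j :=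
  hmono (by simpa [Fin.le_def] using min_le_min_right n hij)

lemma zn_zero : zn n z 0 = z 0 := by
  simp [zn]

lemma zn_last : zn n z n = z (Fin.last n) := by
  simp [zn, Fin.last]

lemma zn_coe (k : Fin (n + 1)) : zn n z k = z k := by
  have : min (k : ℕ) n = (k : ℕ) := min_eq_left (Nat.lt_succ_iff.mp k.isLt)
  simp only [zn]
  congr 1
  exact Fin.ext this

lemma zn_pos (i : ℕ) : 0 < zn n z i := by
  have h := zn_mono hn hz0 hmono hineq (Nat.zero_le i)
  have h0 : zn n z 0 = z 0 := zn_zero hn hz0 hmono hineq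
  linarith

lemma sum_eq_A : ∑ i, z i = A n z n := by
  rw [A, ← Fin.sum_univ_eq_sum_range (fun i => zn n z i) (n + 1)]
  exact Finset.sum_congr rfl fun i _ => (zn_coe hn hz0 hmono hineq i).symm

lemma A_succ (k : ℕ) : A n z (k + 1) = A n z k + zn n z (k + 1) := by
  rw [A, A, Finset.sum_range_succ]

lemma eps_pos : 0 < eps n z := by
  have h0 : 0 < zn n z 0 := zn_pos hn hz0 hmono hineq 0
  have h2 : 0 < (A n z n - 2 * zn n z n) / ((n : ℝ) - 1) := by
    apply div_pos
    · have h3 := zn_last hn hz0 hmono hineq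
      have h4 := sum_eq_A hn hz0 hmono hineq
      linarith
    · have : (2 : ℝ) ≤ n := by exact_mod_cast hn
      linarith
  exact lt_min (by linarith) h2

lemma eps_lt : eps n z < zn n z 0 := by
  have h := zn_pos hn hz0 hmono hineq 0
  calc eps n z ≤ zn n z 0 / 2 := min_le_left _ _
    _ < zn n z 0 := by linarith

lemma ff_ge (k : ℕ) : zn n z 0 ≤ ff n z k := by
  have h1 : ((k : ℝ) + 1) * zn n z 0 ≤ A n z k := by
    induction k with
    | zero => simp [A]
    | succ m ih =>
        rw [A_succ hn hz0 hmono hineq]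
        have h1 : zn n z 0 ≤ zn n z (m + 1) := zn_mono hn hz0 hmono hineq (Nat.zero_le _)
        push_cast
        linarith
  have h2 := eps_lt hn hz0 hmono hineq
  have h3 : (k : ℝ) * eps n z ≤ (k : ℝ) * zn n z 0 :=
    mul_le_mul_of_nonneg_left h2.le (Nat.cast_nonneg k)
  simp only [ff]
  linarith

lemma gg_ge {k : ℕ} (hk : k + 1 ≤ n) : zn n z n ≤ gg n z k := by
  have h1 : (0 : ℝ) ≤ (n : ℝ) - 1 - k := by
    have : (k : ℝ) + 1 ≤ n := by exact_mod_cast hk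
    linarith
  have h2 := eps_pos hn hz0 hmono hineq
  have h3 := mul_nonneg h1 h2.le
  simp only [gg]
  linarith

lemma rr_ge {k : ℕ} (hk : k + 1 ≤ n) : zn n z 0 ≤ rr n z k := by
  refine le_min (ff_ge hn hz0 hmono hineq k) ?_
  exact le_trans (zn_mono hn hz0 hmono hineq (Nat.zero_le n)) (gg_ge hn hz0 hmono hineq hk)

lemma rr_pos {k : ℕ} (hk : k + 1 ≤ n) : 0 < rr n z k :=
  lt_of_lt_of_le (zn_pos hn hz0 hmono hineq 0) (rr_ge hn hz0 hmono hineq hk)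

lemma rr_zero : rr n z 0 = zn n z 0 := by
  have h1 : ff n z 0 = zn n z 0 := by simp [ff, A]
  have h2 : zn n z 0 ≤ gg n z 0 := by
    refine le_trans (zn_mono hn hz0 hmono hineq (Nat.zero_le n))
      (gg_ge hn hz0 hmono hineq ?_)
    omega
  rw [rr, h1, min_eq_left h2]

lemma rr_last {m : ℕ} (hm : m + 1 = n) : rr n z m = zn n z n := by
  have hA : A n z n = A n z m + zn n z n := by
    have h := A_succ hn hz0 hmono hineq (z := z) m
    rw [hm] at h
    exact h
  have hne : (0 : ℝ) < (n : ℝ) - 1 := by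
    have : (2 : ℝ) ≤ n := by exact_mod_cast hn
    linarith
  have heps : ((n : ℝ) - 1) * eps n z ≤ A n z n - 2 * zn n z n := by
    have h5 : eps n z ≤ (A n z n - 2 * zn n z n) / ((n : ℝ) - 1) := min_le_right _ _
    calc ((n : ℝ) - 1) * eps n z
        ≤ ((n : ℝ) - 1) * ((A n z n - 2 * zn n z n) / ((n : ℝ) - 1)) :=
          mul_le_mul_of_nonneg_left h5 hne.le
      _ = A n z n - 2 * zn n z n := by
          rw [mul_comm, div_mul_cancel₀ _ hne.ne']
  have hmr : (m : ℝ) = (n : ℝ) - 1 := by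
    have : ((m : ℝ) + 1) = n := by exact_mod_cast hm
    linarith
  have hgg : gg n z m = zn n z n := by simp [gg, hmr]
  have hff : zn n z n ≤ ff n z m := by
    simp only [ff, hmr]
    linarith
  rw [rr, hgg, min_eq_right hff]

lemma key_step {m : ℕ} (hm : m + 2 ≤ n) :
    |rr n z (m + 1) - rr n z m| < zn n z (m + 1) ∧
      zn n z (m + 1) < rr n z (m + 1) + rr n z m := by
  have hz1 : 0 < zn n z (m + 1) := zn_pos hn hz0 hmono hineq _
  have heps := eps_pos hn hz0 hmono hineq
  have hepslt := eps_lt hn hz0 hmono hineq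
  have hz01 : zn n z 0 ≤ zn n z (m + 1) := zn_mono hn hz0 hmono hineq (Nat.zero_le _)
  have hz1n : zn n z (m + 1) ≤ zn n z n := zn_mono hn hz0 hmono hineq (by omega)
  have hford : ff n z (m + 1) = ff n z m + zn n z (m + 1) - eps n z := by
    simp only [ff, A_succ hn hz0 hmono hineq]
    push_cast
    ring
  have hg : gg n z (m + 1) = gg n z m - eps n z := by
    simp only [gg]
    push_cast
    ring
  have hf1 := ff_ge hn hz0 hmono hineq m
  have hf1' := ff_ge hn hz0 hmono hineq (m + 1)
  have hg1 : zn n z n ≤ gg n z m := gg_ge hn hz0 hmono hineq (by omega)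
  have hg1' : zn n z n ≤ gg n z (m + 1) := gg_ge hn hz0 hmono hineq (by omega)
  simp only [rr]
  rcases min_cases (ff n z (m + 1)) (gg n z (m + 1)) with ⟨e1, le1⟩ | ⟨e1, le1⟩ <;>
    rcases min_cases (ff n z m) (gg n z m) with ⟨e2, le2⟩ | ⟨e2, le2⟩ <;>
      rw [e1, e2] <;>
        exact ⟨abs_lt.mpr ⟨by linarith, by linarith⟩, by linarith⟩


lemma pa_eq (m : ℕ) :
    pa n z (m + 1)
      = (rr n z m ^ 2 + rr n z (m + 1) ^ 2 - zn n z (m + 1) ^ 2) / (2 * rr n z m) := by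
  simp [pa]

lemma pb_sq {m : ℕ} (hm : m + 2 ≤ n) :
    0 < rr n z (m + 1) ^ 2 - pa n z (m + 1) ^ 2 := by
  obtain ⟨habs, hsum⟩ := key_step hn hz0 hmono hineq hm
  obtain ⟨hlow, hhigh⟩ := abs_lt.mp habs
  have hs : 0 < rr n z m := rr_pos hn hz0 hmono hineq (by omega)
  have hr : 0 < rr n z (m + 1) := rr_pos hn hz0 hmono hineq (by omega)
  have ht : 0 < zn n z (m + 1) := zn_pos hn hz0 hmono hineq _
  rw [pa_eq hn hz0 hmono hineq]
  set s := rr n z m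
  set r := rr n z (m + 1)
  set t := zn n z (m + 1)
  have hid : r ^ 2 - ((s ^ 2 + r ^ 2 - t ^ 2) / (2 * s)) ^ 2
      = (((r + s) ^ 2 - t ^ 2) * (t ^ 2 - (r - s) ^ 2)) / (2 * s) ^ 2 := by
    field_simp
    ring
  rw [hid]
  have h1 : 0 < (r + s) ^ 2 - t ^ 2 := by nlinarith
  have h2 : 0 < t ^ 2 - (r - s) ^ 2 := by nlinarith
  exact div_pos (mul_pos h1 h2) (by positivity)

lemma pb_sq' {m : ℕ} (hm : m + 2 ≤ n) :
    pb n z (m + 1) ^ 2 = rr n z (m + 1) ^ 2 - pa n z (m + 1) ^ 2 :=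
  Real.sq_sqrt (pb_sq hn hz0 hmono hineq hm).le

lemma pb_pos {m : ℕ} (hm : m + 2 ≤ n) : 0 < pb n z (m + 1) :=
  Real.sqrt_pos.mpr (pb_sq hn hz0 hmono hineq hm)

lemma P_succ_eq {m : ℕ} (hm : m + 2 ≤ n) :
    P n z (m + 1) = (pa n z (m + 1) / rr n z m) • P n z m
      + EuclideanSpace.single ⟨m + 1, by omega⟩ (pb n z (m + 1)) := by
  simp only [P]
  rw [dif_pos (by omega : m + 1 < n)]

lemma P_props : ∀ m : ℕ, m + 1 ≤ n →
    ‖P n z m‖ = rr n z m ∧ (∀ j : Fin n, m < (j : ℕ) → P n z m j = 0) ∧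
      ∀ h : m < n, 0 < P n z m ⟨m, h⟩ := by
  intro m
  induction m with
  | zero =>
      intro h1
      have h0 : 0 < n := h1
      have hP : P n z 0 = EuclideanSpace.single ⟨0, h0⟩ (zn n z 0) := by
        simp only [P]; rw [dif_pos h0]
      have hzp := zn_pos hn hz0 hmono hineq 0
      refine ⟨?_, ?_, ?_⟩
      · rw [hP, EuclideanSpace.norm_single, Real.norm_eq_abs, abs_of_pos hzp,
          rr_zero hn hz0 hmono hineq]
      · intro j hj
        rw [hP, EuclideanSpace.single_apply, if_neg (by simp [Fin.ext_iff]; omega)]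
      · intro h
        rw [hP, EuclideanSpace.single_apply, if_pos (Fin.ext rfl)]
        exact hzp
  | succ m ih =>
      intro h1
      have hmn : m + 1 ≤ n := by omega
      obtain ⟨ihn, ihz, ihp⟩ := ih hmn
      have hs := rr_pos hn hz0 hmono hineq hmn
      have hr := rr_pos hn hz0 hmono hineq (k := m + 1) (by omega)
      have hb2 := pb_sq' hn hz0 hmono hineq h1
      have hbpos := pb_pos hn hz0 hmono hineq h1
      have hPe := P_succ_eq hn hz0 hmono hineq h1
      have hvj : P n z m ⟨m + 1, by omega⟩ = 0 := ihz _ (by simp)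
      refine ⟨?_, ?_, ?_⟩
      · have hsq : ‖P n z (m + 1)‖ ^ 2 = rr n z (m + 1) ^ 2 := by
          rw [hPe, norm_sq_aux _ _ _ _ hvj, ihn, hb2]
          field_simp
          ring
        exact eq_of_sq_eq (norm_nonneg _) hr hsq
      · intro j hj
        rw [hPe, apply_aux, ihz j (by omega), if_neg (by simp [Fin.ext_iff]; omega)]
        simp
      · intro h
        rw [hPe, apply_aux, hvj, if_pos (Fin.ext rfl)]
        simpa using hbpos

lemma dist_succ {m : ℕ} (hm : m + 2 ≤ n) :
    ‖P n z (m + 1) - P n z m‖ = zn n z (m + 1) := by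
  obtain ⟨ihn, ihz, _⟩ := P_props hn hz0 hmono hineq m (by omega)
  have hs := rr_pos hn hz0 hmono hineq (k := m) (by omega)
  have ht := zn_pos hn hz0 hmono hineq (m + 1)
  have hb2 := pb_sq' hn hz0 hmono hineq hm
  have hvj : P n z m ⟨m + 1, by omega⟩ = 0 := ihz _ (by simp)
  have hPe := P_succ_eq hn hz0 hmono hineq hm
  have hsub : P n z (m + 1) - P n z m
      = (pa n z (m + 1) / rr n z m - 1) • P n z m
        + EuclideanSpace.single ⟨m + 1, by omega⟩ (pb n z (m + 1)) := by
    rw [hPe]; module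
  have hsq : ‖P n z (m + 1) - P n z m‖ ^ 2 = zn n z (m + 1) ^ 2 := by
    rw [hsub, norm_sq_aux _ _ _ _ hvj, ihn, hb2, pa_eq hn hz0 hmono hineq]
    field_simp
    ring
  exact eq_of_sq_eq (norm_nonneg _) ht hsq


end Lemmas

end ExistsPointsAux

open scoped RealInnerProductSpace BigOperators

theorem exists_points_with_prescribed_distances (n : ℕ) (hn : 2 ≤ n)
    (z : Fin (n + 1) → ℝ) (hz0 : 0 < z 0) (hmono : Monotone z)
    (hineq : 2 * z (Fin.last n) < ∑ i, z i) :
    ∃ P : Fin (n + 1) → EuclideanSpace ℝ (Fin n),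
      P (Fin.last n) = 0 ∧
      (∀ k : Fin (n + 1), (k : ℕ) < n →
        P k ∈ Submodule.span ℝ
          ((fun i : Fin n => EuclideanSpace.single i (1 : ℝ)) '' {i | (i : ℕ) < (k : ℕ) + 1}) ∧
        P k ∉ Submodule.span ℝ
          ((fun i : Fin n => EuclideanSpace.single i (1 : ℝ)) '' {i | (i : ℕ) < (k : ℕ)})) ∧
      ‖P 0 - P (Fin.last n)‖ = z 0 ∧
      (∀ k : Fin (n + 1), 1 ≤ (k : ℕ) → ‖P k - P (k - 1)‖ = z k) := by
  classical
  open ExistsPointsAux in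
  refine ⟨fun k => if h : (k : ℕ) < n then ExistsPointsAux.P n z (k : ℕ) else 0, ?_, ?_, ?_, ?_⟩
  · simp
  · intro k hk
    obtain ⟨hnorm, hzero, hpos⟩ := ExistsPointsAux.P_props hn hz0 hmono hineq (k : ℕ) hk
    simp only [dif_pos hk]
    constructor
    · exact ExistsPointsAux.mem_span_lt _ _ (fun j hj => hzero j (by omega))
    · exact ExistsPointsAux.not_mem_span_lt _ _ ⟨(k : ℕ), hk⟩ le_rfl (hpos hk).ne'
  · have h0 : ((0 : Fin (n + 1)) : ℕ) = 0 := rfl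
    have h0n : ((0 : Fin (n + 1)) : ℕ) < n := by omega
    have hln : ¬ ((Fin.last n : Fin (n + 1)) : ℕ) < n := by simp
    simp only [h0, dif_neg hln, sub_zero]
    rw [dif_pos (show 0 < n by omega)]
    obtain ⟨hnorm, -, -⟩ := ExistsPointsAux.P_props hn hz0 hmono hineq 0 (by omega)
    rw [hnorm, ExistsPointsAux.rr_zero hn hz0 hmono hineq,
      ExistsPointsAux.zn_zero hn hz0 hmono hineq]
  · intro k hk1
    have hkval : (k : ℕ) ≤ n := Nat.lt_succ_iff.mp k.isLt
    have hk0 : k ≠ 0 := by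
      intro h; rw [h] at hk1; simp at hk1
    have hsub : ((k - 1 : Fin (n + 1)) : ℕ) = (k : ℕ) - 1 := by
      rw [Fin.coe_sub_one, if_neg hk0]
    rcases eq_or_lt_of_le hkval with heq | hlt
    · have hklast : k = Fin.last n := Fin.ext (by simpa using heq)
      have h1 : ¬ ((k : ℕ) < n) := by omega
      have h3 : ((k - 1 : Fin (n + 1)) : ℕ) < n := by omega
      simp only [dif_neg h1, dif_pos h3]
      rw [zero_sub, norm_neg]
      obtain ⟨hnorm, -, -⟩ := ExistsPointsAux.P_props hn hz0 hmono hineq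
        ((k - 1 : Fin (n + 1)) : ℕ) h3
      rw [hnorm]
      have h4 : ((k - 1 : Fin (n + 1)) : ℕ) + 1 = n := by omega
      rw [ExistsPointsAux.rr_last hn hz0 hmono hineq h4,
        ExistsPointsAux.zn_last hn hz0 hmono hineq, hklast]
    · obtain ⟨m, hm⟩ : ∃ m, (k : ℕ) = m + 1 := ⟨(k : ℕ) - 1, by omega⟩
      have h3 : ((k - 1 : Fin (n + 1)) : ℕ) < n := by omega
      simp only [dif_pos hlt, dif_pos h3]
      have h5 : ((k - 1 : Fin (n + 1)) : ℕ) = m := by omega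
      rw [h5, hm, ExistsPointsAux.dist_succ hn hz0 hmono hineq (by omega : m + 2 ≤ n), ← hm,
        ExistsPointsAux.zn_coe hn hz0 hmono hineq k]
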